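/- Let κ be a Markov kernel on ℝ^m and c₁ > 0 a constant such that the log-Harnack inequality holds: for every bounded measurable f : ℝ^m → ℝ with f ≥ 1 and all x, x̄ ∈ ℝ^m, ∫ log f(y) κ(x,dy) ≤ log( ∫ f(y) κ(x̄,dy) ) + c₁ |x − x̄|². Then for every N ≥ 1 the N-fold product kernel κ^{⊗N} on (ℝ^m)^N satisfies the log-Harnack inequality with the same constant: for every bounded measurable F : (ℝ^m)^N → ℝ with F ≥ 1 and all 𝐱 = (x₁,…,x_N), 𝐱̄ = (x̄₁,…,x̄_N) ∈ (ℝ^m)^N, ∫ log F d(κ^{⊗N}(𝐱,·)) ≤ log( ∫ F d(κ^{⊗N}(𝐱̄,·)) ) + c₁ Σ_{i=1}^N |x_i − x̄_i|². -/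

import Mathlib

open MeasureTheory ProbabilityTheory
open scoped ENNReal NNReal

/-- A bounded measurable real-valued function. -/
def BddMeasurableFn {E : Type*} [MeasurableSpace E] (f : E → ℝ) : Prop :=
  Measurable f ∧ ∃ C : ℝ, ∀ x, |f x| ≤ C

private lemma integrable_of_bdd {α : Type*} [MeasurableSpace α] (μ : Measure α)
    [IsFiniteMeasure μ] {f : α → ℝ} (hf : Measurable f) {C : ℝ} (hC : ∀ x, |f x| ≤ C) :
    Integrable f μ :=
  ⟨hf.aestronglyMeasurable,
    HasFiniteIntegral.of_bounded (ae_of_all _ fun a => by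
      simpa [Real.norm_eq_abs] using hC a)⟩

private lemma tensorization_aux (m : ℕ)
    (κ : Kernel (EuclideanSpace ℝ (Fin m)) (EuclideanSpace ℝ (Fin m))) [IsMarkovKernel κ]
    (c₁ : ℝ)
    (h : ∀ f : EuclideanSpace ℝ (Fin m) → ℝ, BddMeasurableFn f → (∀ y, 1 ≤ f y) →
      ∀ x xbar : EuclideanSpace ℝ (Fin m),
        ∫ y, Real.log (f y) ∂(κ x) ≤ Real.log (∫ y, f y ∂(κ xbar)) + c₁ * ‖x - xbar‖ ^ 2) :
    ∀ N : ℕ, ∀ F : (Fin N → EuclideanSpace ℝ (Fin m)) → ℝ, BddMeasurableFn F →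
      (∀ y, 1 ≤ F y) → ∀ x xbar : Fin N → EuclideanSpace ℝ (Fin m),
        ∫ y, Real.log (F y) ∂(Measure.pi fun i => κ (x i))
          ≤ Real.log (∫ y, F y ∂(Measure.pi fun i => κ (xbar i)))
            + c₁ * ∑ i, ‖x i - xbar i‖ ^ 2 := by
  set E := EuclideanSpace ℝ (Fin m) with hE
  intro N
  induction N with
  | zero =>
    intro F hF hF1 x xbar
    rw [Measure.pi_of_empty (fun i => κ (x i)), Measure.pi_of_empty (fun i => κ (xbar i)),
      integral_dirac' _ _ hF.1.log.stronglyMeasurable,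
      integral_dirac' _ _ hF.1.stronglyMeasurable]
    simp
  | succ n IH =>
    intro F hF hF1 x xbar
    obtain ⟨hFm, C, hC⟩ := hF
    -- the bound C is at least 1
    have hC1 : (1 : ℝ) ≤ C := le_trans (le_trans (hF1 _) (le_abs_self _)) (hC fun _ => 0)
    have hFC : ∀ y, F y ≤ C := fun y => le_trans (le_abs_self _) (hC y)
    -- the measurable equivalence splitting off coordinate 0
    set e : (Fin (n + 1) → E) ≃ᵐ E × (Fin n → E) :=
      MeasurableEquiv.piFinSuccAbove (fun _ : Fin (n + 1) => E) 0 with he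
    set G : E × (Fin n → E) → ℝ := fun p => F (e.symm p) with hG
    have hGm : Measurable G := hFm.comp e.symm.measurable
    have hG1 : ∀ p, 1 ≤ G p := fun p => hF1 _
    have hGC : ∀ p, G p ≤ C := fun p => hFC _
    have hGabs : ∀ p, |G p| ≤ C := fun p => abs_le.2 ⟨by linarith [hG1 p], hGC p⟩
    have hlogG : ∀ p, |Real.log (G p)| ≤ Real.log C := fun p => by
      rw [abs_of_nonneg (Real.log_nonneg (hG1 p))]
      exact Real.log_le_log (by linarith [hG1 p]) (hGC p)
    -- tail index maps
    set x' : Fin n → E := fun j => x ((0 : Fin (n + 1)).succAbove j) with hx'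
    set xbar' : Fin n → E := fun j => xbar ((0 : Fin (n + 1)).succAbove j) with hxbar'
    set τ : Measure (Fin n → E) := Measure.pi fun j => κ (x' j) with hτ
    set τbar : Measure (Fin n → E) := Measure.pi fun j => κ (xbar' j) with hτbar
    have hmpx : MeasurePreserving e (Measure.pi fun i => κ (x i)) ((κ (x 0)).prod τ) :=
      measurePreserving_piFinSuccAbove (fun i => κ (x i)) 0
    have hmpxbar : MeasurePreserving e (Measure.pi fun i => κ (xbar i))
        ((κ (xbar 0)).prod τbar) :=
      measurePreserving_piFinSuccAbove (fun i => κ (xbar i)) 0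
    -- rewrite both integrals via the equivalence
    have hLHS : ∫ y, Real.log (F y) ∂(Measure.pi fun i => κ (x i))
        = ∫ p, Real.log (G p) ∂((κ (x 0)).prod τ) := by
      rw [← hmpx.integral_comp e.measurableEmbedding (fun p => Real.log (G p))]
      simp [hG]
      rfl
    have hRHS : ∫ y, F y ∂(Measure.pi fun i => κ (xbar i))
        = ∫ p, G p ∂((κ (xbar 0)).prod τbar) := by
      rw [← hmpxbar.integral_comp e.measurableEmbedding G]
      simp [hG]
      rfl
    -- integrability
    have hint_logG : Integrable (fun p => Real.log (G p)) ((κ (x 0)).prod τ) :=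
      integrable_of_bdd _ (hGm.log) hlogG
    have hint_Gbar : Integrable G ((κ (xbar 0)).prod τbar) :=
      integrable_of_bdd _ hGm hGabs
    -- the function H
    set H : E → ℝ := fun a => ∫ y, G (a, y) ∂τbar with hH
    have hHm : Measurable H :=
      hGm.stronglyMeasurable.integral_prod_right'.measurable
    have hH1 : ∀ a, 1 ≤ H a := fun a => by
      have : ∫ (_ : Fin n → E), (1 : ℝ) ∂τbar ≤ ∫ y, G (a, y) ∂τbar :=
        integral_mono (integrable_const 1)
          (integrable_of_bdd _ (hGm.comp (measurable_prodMk_left)) (fun y => hGabs (a, y)))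
          (fun y => hG1 (a, y))
      simpa using this
    have hHC : ∀ a, H a ≤ C := fun a => by
      have : ∫ y, G (a, y) ∂τbar ≤ ∫ (_ : Fin n → E), C ∂τbar :=
        integral_mono
          (integrable_of_bdd _ (hGm.comp (measurable_prodMk_left)) (fun y => hGabs (a, y)))
          (integrable_const C) (fun y => hGC (a, y))
      simpa using this
    have hHabs : ∀ a, |H a| ≤ C := fun a => abs_le.2 ⟨by linarith [hH1 a], hHC a⟩
    -- inner bound via induction hypothesis
    set S : ℝ := ∑ j, ‖x' j - xbar' j‖ ^ 2 with hS
    have hinner : ∀ a : E, ∫ y, Real.log (G (a, y)) ∂τ ≤ Real.log (H a) + c₁ * S := by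
      intro a
      exact IH (fun y => G (a, y))
        ⟨hGm.comp measurable_prodMk_left, C, fun y => hGabs (a, y)⟩
        (fun y => hG1 (a, y)) x' xbar'
    -- Fubini on the left
    have hfub : ∫ p, Real.log (G p) ∂((κ (x 0)).prod τ)
        = ∫ a, ∫ y, Real.log (G (a, y)) ∂τ ∂(κ (x 0)) :=
      integral_prod _ hint_logG
    have hint_inner : Integrable (fun a => ∫ y, Real.log (G (a, y)) ∂τ) (κ (x 0)) :=
      hint_logG.integral_prod_left
    have hint_logH : Integrable (fun a => Real.log (H a)) (κ (x 0)) :=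
      integrable_of_bdd _ hHm.log (fun a => by
        rw [abs_of_nonneg (Real.log_nonneg (hH1 a))]
        exact Real.log_le_log (by linarith [hH1 a]) (hHC a))
    have step1 : ∫ a, ∫ y, Real.log (G (a, y)) ∂τ ∂(κ (x 0))
        ≤ ∫ a, (Real.log (H a) + c₁ * S) ∂(κ (x 0)) :=
      integral_mono hint_inner (hint_logH.add (integrable_const _)) hinner
    have step2 : ∫ a, (Real.log (H a) + c₁ * S) ∂(κ (x 0))
        = ∫ a, Real.log (H a) ∂(κ (x 0)) + c₁ * S := by
      rw [integral_add hint_logH (integrable_const _)]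
      simp
      rfl
    have step3 : ∫ a, Real.log (H a) ∂(κ (x 0))
        ≤ Real.log (∫ a, H a ∂(κ (xbar 0))) + c₁ * ‖x 0 - xbar 0‖ ^ 2 :=
      h H ⟨hHm, C, hHabs⟩ hH1 (x 0) (xbar 0)
    -- Fubini on the right
    have hfubbar : ∫ p, G p ∂((κ (xbar 0)).prod τbar) = ∫ a, H a ∂(κ (xbar 0)) :=
      integral_prod _ hint_Gbar
    have hsum : ∑ i, ‖x i - xbar i‖ ^ 2 = ‖x 0 - xbar 0‖ ^ 2 + S := by
      rw [hS]
      exact Fin.sum_univ_succAbove (fun i => ‖x i - xbar i‖ ^ 2) 0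
    rw [hLHS, hRHS, hfub, hfubbar, hsum]
    calc ∫ a, ∫ y, Real.log (G (a, y)) ∂τ ∂(κ (x 0))
        ≤ ∫ a, Real.log (H a) ∂(κ (x 0)) + c₁ * S := by rw [← step2]; exact step1
      _ ≤ Real.log (∫ a, H a ∂(κ (xbar 0))) + c₁ * ‖x 0 - xbar 0‖ ^ 2 + c₁ * S := by
          linarith [step3]
      _ = Real.log (∫ a, H a ∂(κ (xbar 0))) + c₁ * (‖x 0 - xbar 0‖ ^ 2 + S) := by ring

/-- (Tensorization of the log-Harnack inequality.)  If a Markov kernel `κ` on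
`ℝ^m` satisfies the log-Harnack inequality
`∫ log f dκ(x,·) ≤ log (∫ f dκ(x̄,·)) + c₁ |x − x̄|²` for all bounded measurable `f ≥ 1`, then
for every `N ≥ 1` the `N`-fold product kernel satisfies the log-Harnack inequality on
`(ℝ^m)^N` with the same constant `c₁`. -/
theorem statement_4 (m : ℕ)
    (κ : Kernel (EuclideanSpace ℝ (Fin m)) (EuclideanSpace ℝ (Fin m))) [IsMarkovKernel κ]
    (c₁ : ℝ) (hc₁ : 0 < c₁)
    (h : ∀ f : EuclideanSpace ℝ (Fin m) → ℝ, BddMeasurableFn f → (∀ y, 1 ≤ f y) →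
      ∀ x xbar : EuclideanSpace ℝ (Fin m),
        ∫ y, Real.log (f y) ∂(κ x) ≤ Real.log (∫ y, f y ∂(κ xbar)) + c₁ * ‖x - xbar‖ ^ 2) :
    ∀ N : ℕ, 1 ≤ N → ∀ F : (Fin N → EuclideanSpace ℝ (Fin m)) → ℝ, BddMeasurableFn F →
      (∀ y, 1 ≤ F y) → ∀ x xbar : Fin N → EuclideanSpace ℝ (Fin m),
        ∫ y, Real.log (F y) ∂(Measure.pi fun i => κ (x i))
          ≤ Real.log (∫ y, F y ∂(Measure.pi fun i => κ (xbar i)))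
            + c₁ * ∑ i, ‖x i - xbar i‖ ^ 2 := by
  intro N _ F hF hF1 x xbar
  exact tensorization_aux m κ c₁ h N F hF hF1 x xbar
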